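/- Let Q be a J×J row-stochastic matrix, a ∈ ℝ^J with aᵀQ^ρ = 0 for some ρ ≥ 1, m ∈ ℝ^J, and c ∈ ℝ. Then the equation c = β · aᵀ(I - βQ)^{-1}m, viewed as an equation in β ∈ ℝ, has at most ρ solutions, provided c ≠ 0 or aᵀm ≠ 0. -/

import Mathlib

open Matrix Polynomial

lemma stmt8_sum_vecMul {J : ℕ} (s : Finset ℕ) (f : ℕ → Fin J → ℝ)
    (M : Matrix (Fin J) (Fin J) ℝ) :
    (∑ r ∈ s, f r) ᵥ* M = ∑ r ∈ s, (f r) ᵥ* M := by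
  classical
  induction s using Finset.induction with
  | empty => simp
  | insert _ _ h ih => simp [Finset.sum_insert h, Matrix.add_vecMul, ih]

lemma stmt8_vecMul_smulM {J : ℕ} (β : ℝ) (v : Fin J → ℝ) (Q : Matrix (Fin J) (Fin J) ℝ) :
    v ᵥ* (β • Q) = β • (v ᵥ* Q) := by
  ext j
  simp only [Matrix.vecMul, dotProduct, Matrix.smul_apply, Pi.smul_apply,
    smul_eq_mul, Finset.mul_sum]
  exact Finset.sum_congr rfl fun i _ => by ring

lemma stmt8_sum_dotProduct {J : ℕ} (s : Finset ℕ) (f : ℕ → Fin J → ℝ) (m : Fin J → ℝ) :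
    (∑ r ∈ s, f r) ⬝ᵥ m = ∑ r ∈ s, (f r) ⬝ᵥ m := by
  classical
  induction s using Finset.induction with
  | empty => simp
  | insert _ _ h ih => simp [Finset.sum_insert h, add_dotProduct, ih]

theorem stmt_8 {J : ℕ} (Q : Matrix (Fin J) (Fin J) ℝ)
    (hQ0 : ∀ i j, 0 ≤ Q i j) (hQ1 : ∀ i, ∑ j, Q i j = 1)
    (a m : Fin J → ℝ) (ρ : ℕ) (hρ : 1 ≤ ρ)
    (hfd : a ᵥ* Q ^ ρ = 0) (c : ℝ)
    (hnz : c ≠ 0 ∨ a ⬝ᵥ m ≠ 0) :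
    ({β : ℝ | |β| < 1 ∧ c = β * (a ⬝ᵥ ((1 - β • Q)⁻¹ *ᵥ m))}).Finite ∧
      ({β : ℝ | |β| < 1 ∧ c = β * (a ⬝ᵥ ((1 - β • Q)⁻¹ *ᵥ m))}).ncard ≤ ρ := by
  classical
  set d : ℕ → ℝ := fun r => (a ᵥ* Q ^ r) ⬝ᵥ m with hd
  -- key identity
  have key : ∀ β : ℝ, |β| < 1 →
      β * (a ⬝ᵥ ((1 - β • Q)⁻¹ *ᵥ m)) = ∑ r ∈ Finset.range ρ, d r * β ^ (r + 1) := by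
    intro β hβ
    have hdet : (1 - β • Q).det ≠ 0 := by
      apply det_ne_zero_of_sum_row_lt_diag
      intro k
      have hQkk : Q k k ≤ 1 := by
        rw [← hQ1 k]
        exact Finset.single_le_sum (fun j _ => hQ0 k j) (Finset.mem_univ k)
      have h1 : ∀ j, (1 - β • Q) k j = (if k = j then 1 else 0) - β * Q k j := by
        intro j; simp [Matrix.sub_apply, Matrix.one_apply, Matrix.smul_apply]
      calc ∑ j ∈ Finset.univ.erase k, ‖(1 - β • Q) k j‖
          = ∑ j ∈ Finset.univ.erase k, |β| * Q k j := by
            refine Finset.sum_congr rfl fun j hj => ?_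
            rw [h1 j, if_neg (fun h => (Finset.mem_erase.mp hj).1 h.symm)]
            simp [Real.norm_eq_abs, abs_mul, abs_of_nonneg (hQ0 k j)]
        _ = |β| * (1 - Q k k) := by
            rw [← Finset.mul_sum, Finset.sum_erase_eq_sub (Finset.mem_univ k), hQ1 k]
        _ < 1 - |β| * Q k k := by nlinarith [abs_nonneg β, hQ0 k k]
        _ ≤ ‖(1 - β • Q) k k‖ := by
            rw [h1 k, if_pos rfl, Real.norm_eq_abs]
            have h2 := abs_sub_abs_le_abs_sub (1 : ℝ) (β * Q k k)
            rw [abs_one, abs_mul, abs_of_nonneg (hQ0 k k)] at h2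
            linarith
    set M := 1 - β • Q with hM
    set f : ℕ → (Fin J → ℝ) := fun r => β ^ r • (a ᵥ* Q ^ r) with hf
    set v : Fin J → ℝ := ∑ r ∈ Finset.range ρ, f r with hv
    have hvQ : v ᵥ* Q = ∑ r ∈ Finset.range ρ, β ^ r • (a ᵥ* Q ^ (r + 1)) := by
      rw [hv, stmt8_sum_vecMul]
      refine Finset.sum_congr rfl fun r _ => ?_
      rw [hf]
      simp [Matrix.smul_vecMul, Matrix.vecMul_vecMul, pow_succ]
    have hvM : v ᵥ* M = a := by
      rw [hM, Matrix.vecMul_sub, Matrix.vecMul_one, stmt8_vecMul_smulM, hvQ]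
      have hsm : β • ∑ r ∈ Finset.range ρ, β ^ r • (a ᵥ* Q ^ (r + 1))
          = ∑ r ∈ Finset.range ρ, f (r + 1) := by
        rw [Finset.smul_sum]
        refine Finset.sum_congr rfl fun r _ => ?_
        rw [hf, smul_smul, ← pow_succ']
      rw [hsm, hv, ← Finset.sum_sub_distrib, Finset.sum_range_sub' f]
      simp [hf, hfd]
    have hinv : a ᵥ* M⁻¹ = v := by
      rw [← hvM, Matrix.vecMul_vecMul,
        Matrix.mul_nonsing_inv _ (isUnit_iff_ne_zero.mpr hdet), Matrix.vecMul_one]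
    rw [Matrix.dotProduct_mulVec, hinv, hv, stmt8_sum_dotProduct, Finset.mul_sum]
    refine Finset.sum_congr rfl fun r _ => ?_
    rw [hf]
    simp only [smul_dotProduct, smul_eq_mul, hd]
    ring
  -- the polynomial
  set P : Polynomial ℝ :=
    (∑ r ∈ Finset.range ρ, Polynomial.C (d r) * Polynomial.X ^ (r + 1)) - Polynomial.C c
    with hP
  have hcoeff0 : P.coeff 0 = -c := by
    simp [hP, Polynomial.finset_sum_coeff, Polynomial.coeff_C_mul, Polynomial.coeff_X_pow]
  have hcoeff1 : P.coeff 1 = a ⬝ᵥ m := by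
    have hd0 : d 0 = a ⬝ᵥ m := by simp [hd]
    rw [hP]
    rw [Polynomial.coeff_sub, Polynomial.finset_sum_coeff]
    simp only [Polynomial.coeff_C_mul, Polynomial.coeff_X_pow]
    have hterm : ∀ r : ℕ, (d r * if (1:ℕ) = r + 1 then (1:ℝ) else 0)
        = if r = 0 then d 0 else 0 := by
      intro r; rcases r with _ | r <;> simp
    rw [Finset.sum_congr rfl fun r _ => hterm r, Finset.sum_ite_eq' (Finset.range ρ) 0
      (fun _ => d 0)]
    simp [Finset.mem_range, hρ, hd0, Nat.lt_of_lt_of_le Nat.zero_lt_one hρ]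
  have hP0 : P ≠ 0 := by
    rcases hnz with h | h
    · intro hc; rw [hc] at hcoeff0; simp only [Polynomial.coeff_zero] at hcoeff0
      exact h (by linarith)
    · intro hc; rw [hc] at hcoeff1; simp only [Polynomial.coeff_zero] at hcoeff1
      exact h hcoeff1.symm
  have hdeg : P.natDegree ≤ ρ := by
    refine (Polynomial.natDegree_sub_le _ _).trans (max_le ?_ (by simp))
    refine Polynomial.natDegree_sum_le_of_forall_le _ _ fun r hr => ?_
    exact (Polynomial.natDegree_C_mul_X_pow_le _ _).trans (Finset.mem_range.mp hr)
  have hsub : {β : ℝ | |β| < 1 ∧ c = β * (a ⬝ᵥ ((1 - β • Q)⁻¹ *ᵥ m))}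
      ⊆ ↑P.roots.toFinset := by
    rintro β ⟨h1, h2⟩
    rw [Finset.mem_coe, Multiset.mem_toFinset, Polynomial.mem_roots hP0]
    have := key β h1
    rw [Polynomial.IsRoot, hP]
    simp only [Polynomial.eval_sub, Polynomial.eval_finset_sum, Polynomial.eval_mul,
      Polynomial.eval_C, Polynomial.eval_pow, Polynomial.eval_X]
    rw [← this, ← h2, sub_self]
  constructor
  · exact Set.Finite.subset (P.roots.toFinset.finite_toSet) hsub
  · calc ({β : ℝ | |β| < 1 ∧ c = β * (a ⬝ᵥ ((1 - β • Q)⁻¹ *ᵥ m))}).ncard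
        ≤ (↑P.roots.toFinset : Set ℝ).ncard :=
          Set.ncard_le_ncard hsub (P.roots.toFinset.finite_toSet)
      _ = P.roots.toFinset.card := Set.ncard_coe_finset _
      _ ≤ Multiset.card P.roots := Multiset.toFinset_card_le _
      _ ≤ P.natDegree := Polynomial.card_roots' P
      _ ≤ ρ := hdeg
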